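/- For even n = 2m, the polynomial p(s) = ₂F₁(-m, (μ+s)/2; μ+1/2; 2) satisfies the difference equation [2(n+μ)+1](s+μ-2) p(s) - (s+μ)(s+μ-2) p(s+2) + [(s-2)(s-1) + (1-μ)μ] p(s-2) = 0 for all complex s. -/

import Mathlib

/-- Rising factorial (Pochhammer symbol) on ℂ. -/
noncomputable def ascC (a : ℂ) (k : ℕ) : ℂ := ∏ i ∈ Finset.range k, (a + i)

/-- Terminating Gauss hypergeometric sum `₂F₁(-n, b; c; 2)`. -/
noncomputable def F2 (n : ℕ) (b c : ℂ) : ℂ :=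
  ∑ j ∈ Finset.range (n + 1),
    ascC (-(n : ℂ)) j * ascC b j / ascC c j * 2 ^ j / (j.factorial : ℂ)

lemma ascC_zero (a : ℂ) : ascC a 0 = 1 := by simp [ascC]

lemma ascC_succ (a : ℂ) (k : ℕ) : ascC a (k + 1) = ascC a k * (a + k) :=
  Finset.prod_range_succ _ _

lemma ascC_shift (a : ℂ) (k : ℕ) : ascC a (k + 1) = a * ascC (a + 1) k := by
  unfold ascC
  rw [Finset.prod_range_succ']
  have : ∀ i : ℕ, a + ((i : ℂ) + 1) = a + 1 + i := fun i => by ring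
  simp only [Nat.cast_add, Nat.cast_one]
  rw [Finset.prod_congr rfl fun i _ => this i]
  push_cast
  ring

/-- Summand of `F2`. -/
noncomputable def Tm (m : ℕ) (c b : ℂ) (j : ℕ) : ℂ :=
  ascC (-(m : ℂ)) j * ascC b j / ascC c j * 2 ^ j / (j.factorial : ℂ)

/-- Telescoping witness. -/
noncomputable def Wm (m : ℕ) (b c : ℂ) : ℕ → ℂ
  | 0 => 0
  | (k + 1) => 2 * ((k : ℂ) - m) * (ascC (-(m : ℂ)) k * ascC b k / ascC c k * 2 ^ k /
      (k.factorial : ℂ))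

lemma term_eq (m : ℕ) (b c : ℂ) (hc : ∀ j, ascC c j ≠ 0) (j : ℕ) :
    (2 * m + c) * Tm m c b j - b * Tm m c (b + 1) j + (b - c) * Tm m c (b - 1) j =
      Wm m b c j - Wm m b c (j + 1) := by
  cases j with
  | zero =>
      simp [Tm, Wm, ascC_zero]
  | succ k =>
      have hfac : ((k.factorial : ℕ) : ℂ) ≠ 0 := Nat.cast_ne_zero.mpr k.factorial_ne_zero
      have hfac' : (((k + 1).factorial : ℕ) : ℂ) ≠ 0 :=
        Nat.cast_ne_zero.mpr (k + 1).factorial_ne_zero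
      have h1 : ascC (b - 1) (k + 1) = (b - 1) * ascC b k := by
        rw [ascC_shift]
        norm_num
      have h2 : b * ascC (b + 1) (k + 1) = ascC b k * ((b + k) * (b + k + 1)) := by
        rw [← ascC_shift, ascC_succ, ascC_succ]
        push_cast
        ring
      have h3 : ascC b (k + 1) = ascC b k * (b + k) := ascC_succ b k
      have h4 : ascC c (k + 1) = ascC c k * (c + k) := ascC_succ c k
      have h5 : ascC (-(m : ℂ)) (k + 1) = ascC (-(m : ℂ)) k * (-(m : ℂ) + k) :=
        ascC_succ _ k
      have hck : ascC c k ≠ 0 := hc k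
      have hck1 : (c + k) ≠ 0 := by
        intro h
        exact hc (k + 1) (by rw [h4, h, mul_zero])
      have hfs : (((k + 1).factorial : ℕ) : ℂ) = (k.factorial : ℂ) * (k + 1) := by
        rw [Nat.factorial_succ]
        push_cast
        ring
      simp only [Tm, Wm]
      have hbt : b * (ascC (-(m : ℂ)) (k + 1) * ascC (b + 1) (k + 1) /
          ascC c (k + 1) * 2 ^ (k + 1) / (((k + 1).factorial : ℕ) : ℂ)) =
          ascC (-(m : ℂ)) (k + 1) * (b * ascC (b + 1) (k + 1)) /
          ascC c (k + 1) * 2 ^ (k + 1) / (((k + 1).factorial : ℕ) : ℂ) := by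
        ring
      rw [hbt, h2, h1, h3, h4, h5, hfs]
      have hk1 : ((k : ℂ) + 1) ≠ 0 := by
        have : (0 : ℝ) < (k : ℝ) + 1 := by positivity
        intro h
        have := congrArg Complex.re h
        simp at this
        linarith
      field_simp
      push_cast
      ring

lemma key (m : ℕ) (b c : ℂ) (hc : ∀ j, ascC c j ≠ 0) :
    (2 * m + c) * F2 m b c - b * F2 m (b + 1) c + (b - c) * F2 m (b - 1) c = 0 := by
  have hF : ∀ b' : ℂ, F2 m b' c = ∑ j ∈ Finset.range (m + 1), Tm m c b' j := fun _ => rfl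
  rw [hF, hF, hF, Finset.mul_sum, Finset.mul_sum, Finset.mul_sum, ← Finset.sum_sub_distrib,
    ← Finset.sum_add_distrib]
  rw [Finset.sum_congr rfl fun j _ => term_eq m b c hc j]
  rw [Finset.sum_range_sub' (Wm m b c) (m + 1)]
  simp [Wm]

theorem stmt9 (μ : ℝ) (hμ : μ > -(1/2)) (m : ℕ) (n : ℕ) (hn : n = 2 * m) (s : ℂ)
    (p : ℂ → ℂ) (hp : ∀ z : ℂ, p z = F2 m (((μ : ℂ) + z) / 2) ((μ : ℂ) + 1/2)) :
    (2 * ((n : ℂ) + (μ : ℂ)) + 1) * (s + (μ : ℂ) - 2) * p s -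
        (s + (μ : ℂ)) * (s + (μ : ℂ) - 2) * p (s + 2) +
        ((s - 2) * (s - 1) + (1 - (μ : ℂ)) * (μ : ℂ)) * p (s - 2) = 0 := by
  have hc : ∀ j, ascC ((μ : ℂ) + 1/2) j ≠ 0 := by
    intro j
    refine Finset.prod_ne_zero_iff.mpr fun i _ => ?_
    have h : ((μ : ℂ) + 1/2 + i) = ((μ + 1/2 + i : ℝ) : ℂ) := by push_cast; ring
    rw [h]
    refine Complex.ofReal_ne_zero.mpr (ne_of_gt ?_)
    have : (0 : ℝ) ≤ (i : ℝ) := Nat.cast_nonneg i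
    linarith
  rw [hp s, hp (s + 2), hp (s - 2), hn]
  have h1 : ((μ : ℂ) + (s + 2)) / 2 = ((μ : ℂ) + s) / 2 + 1 := by ring
  have h2 : ((μ : ℂ) + (s - 2)) / 2 = ((μ : ℂ) + s) / 2 - 1 := by ring
  rw [h1, h2]
  have hkey := key m (((μ : ℂ) + s) / 2) ((μ : ℂ) + 1/2) hc
  push_cast
  linear_combination (2 * (s + (μ : ℂ) - 2)) * hkey
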